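/- The Lebesgue volume of the region {(d_1,d_2,d_3) ∈ [0,2]^3 : d_1 > d_2, d_1 > d_3, d_1 < d_2 + d_3, d_1^2 > d_2^2 + d_3^2} equals 2(π−2)/3. -/
import Mathlib
open MeasureTheory Real Set intervalIntegral

lemma intSqrtInt (a b : ℝ) : IntervalIntegrable (fun x => Real.sqrt (1 - x^2)) volume a b := by
  have : Continuous fun x : ℝ => Real.sqrt (1 - x^2) :=
    Real.continuous_sqrt.comp (by continuity)
  exact this.intervalIntegrable a b

lemma intA : ∫ x in (0:ℝ)..1, Real.sqrt (1 - x^2) = π / 4 := by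
  have h := integral_sqrt_one_sub_sq
  have h2 : ∫ x in (-1:ℝ)..0, Real.sqrt (1 - x^2) = ∫ x in (0:ℝ)..1, Real.sqrt (1 - x^2) := by
    have := intervalIntegral.integral_comp_neg (a := 0) (b := 1) (fun x => Real.sqrt (1 - x^2))
    simp only [neg_zero, neg_one_sq] at this
    rw [← this]
    congr 1; ext x; ring_nf
  have h3 := intervalIntegral.integral_add_adjacent_intervals (intSqrtInt (-1) 0) (intSqrtInt 0 1)
  rw [h2, h] at h3
  linarith

lemma intB {r : ℝ} (hr : 0 < r) : ∫ x in (0:ℝ)..r, Real.sqrt (r^2 - x^2) = π * r^2 / 4 := by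
  have := intervalIntegral.smul_integral_comp_mul_left (a := 0) (b := 1)
    (fun x => Real.sqrt (r^2 - x^2)) r
  simp only [mul_zero, mul_one, smul_eq_mul] at this
  rw [← this]
  have heq : ∀ t : ℝ, Real.sqrt (r^2 - (r*t)^2) = r * Real.sqrt (1 - t^2) := by
    intro t
    rw [show r^2 - (r*t)^2 = r^2 * (1 - t^2) by ring, Real.sqrt_mul (sq_nonneg r),
      Real.sqrt_sq hr.le]
  simp only [heq]
  rw [intervalIntegral.integral_const_mul, intA]
  ring

def mySlice (r : ℝ) : Set (ℝ × ℝ) :=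
  {q | q.1 ∈ Set.Icc (0:ℝ) 2 ∧ q.2 ∈ Set.Icc (0:ℝ) 2 ∧
    q.1 < r ∧ q.2 < r ∧ r < q.1 + q.2 ∧ q.1 ^ 2 + q.2 ^ 2 < r ^ 2}

lemma slice_eq {r : ℝ} (hr : 0 < r) (hr2 : r ≤ 2) :
    mySlice r = regionBetween (fun x => r - x) (fun x => Real.sqrt (r^2 - x^2)) (Ioo 0 r) := by
  ext ⟨x, y⟩
  simp only [mySlice, regionBetween, mem_setOf_eq, mem_Ioo, mem_Icc]
  constructor
  · rintro ⟨⟨hx0, hx2⟩, ⟨hy0, hy2⟩, hxr, hyr, hsum, hsq⟩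
    have hxpos : 0 < x := by
      by_contra h
      push_neg at h
      have hy : r < y := by linarith
      nlinarith
    refine ⟨⟨hxpos, hxr⟩, by linarith, ?_⟩
    rw [Real.lt_sqrt hy0]
    linarith
  · rintro ⟨⟨hx0, hxr⟩, hfy, hgy⟩
    have hy0 : 0 ≤ y := by linarith
    rw [Real.lt_sqrt hy0] at hgy
    have hyr : y < r := by nlinarith
    exact ⟨⟨hx0.le, by linarith⟩, ⟨hy0, by linarith⟩, hxr, hyr, by linarith, by linarith⟩

lemma slice_vol {r : ℝ} (hr : 0 < r) (hr2 : r ≤ 2) :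
    volume (mySlice r) = ENNReal.ofReal ((π - 2) / 4 * r ^ 2) := by
  rw [slice_eq hr hr2, Measure.volume_eq_prod]
  have hg : Continuous fun x : ℝ => Real.sqrt (r^2 - x^2) :=
    Real.continuous_sqrt.comp (by continuity)
  have hf_int : IntegrableOn (fun x : ℝ => r - x) (Ioo 0 r) volume :=
    ((continuous_const.sub continuous_id).continuousOn.integrableOn_Icc).mono_set
      Ioo_subset_Icc_self
  have hg_int : IntegrableOn (fun x : ℝ => Real.sqrt (r^2 - x^2)) (Ioo 0 r) volume :=
    (hg.continuousOn.integrableOn_Icc).mono_set Ioo_subset_Icc_self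
  rw [volume_regionBetween_eq_integral hf_int hg_int measurableSet_Ioo ?_]
  · congr 1
    rw [← MeasureTheory.integral_Ioc_eq_integral_Ioo, ← intervalIntegral.integral_of_le hr.le]
    have h1 : ∫ x in (0:ℝ)..r, ((fun x => Real.sqrt (r^2 - x^2)) - fun x => r - x) x
        = (∫ x in (0:ℝ)..r, Real.sqrt (r^2 - x^2)) - ∫ x in (0:ℝ)..r, (r - x) := by
      simp only [Pi.sub_apply]
      exact intervalIntegral.integral_sub (hg.intervalIntegrable 0 r)
        ((continuous_const.sub continuous_id).intervalIntegrable 0 r)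
    rw [h1, intB hr]
    have h2 : ∫ x in (0:ℝ)..r, (r - x) = r ^ 2 / 2 := by
      rw [intervalIntegral.integral_sub (intervalIntegrable_const)
        (intervalIntegral.intervalIntegrable_id), intervalIntegral.integral_const,
        integral_id]
      norm_num
      ring
    rw [h2]; ring
  · intro x hx
    simp only [mem_Ioo] at hx
    rw [Real.le_sqrt (by linarith) (by nlinarith)]
    nlinarith

theorem stmt_2 :
    volume {p : ℝ × ℝ × ℝ |
      p.1 ∈ Set.Icc (0:ℝ) 2 ∧ p.2.1 ∈ Set.Icc (0:ℝ) 2 ∧ p.2.2 ∈ Set.Icc (0:ℝ) 2 ∧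
      p.2.1 < p.1 ∧ p.2.2 < p.1 ∧ p.1 < p.2.1 + p.2.2 ∧
      p.2.1 ^ 2 + p.2.2 ^ 2 < p.1 ^ 2} = ENNReal.ofReal (2 * (π - 2) / 3) := by
  set S : Set (ℝ × ℝ × ℝ) := {p : ℝ × ℝ × ℝ |
      p.1 ∈ Set.Icc (0:ℝ) 2 ∧ p.2.1 ∈ Set.Icc (0:ℝ) 2 ∧ p.2.2 ∈ Set.Icc (0:ℝ) 2 ∧
      p.2.1 < p.1 ∧ p.2.2 < p.1 ∧ p.1 < p.2.1 + p.2.2 ∧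
      p.2.1 ^ 2 + p.2.2 ^ 2 < p.1 ^ 2} with hS
  have hmeas : MeasurableSet S := by
    rw [hS]
    apply MeasurableSet.inter
    · exact (measurableSet_Icc).preimage measurable_fst
    apply MeasurableSet.inter
    · exact (measurableSet_Icc).preimage (measurable_fst.comp measurable_snd)
    apply MeasurableSet.inter
    · exact (measurableSet_Icc).preimage (measurable_snd.comp measurable_snd)
    apply MeasurableSet.inter
    · exact measurableSet_lt (measurable_fst.comp measurable_snd) measurable_fst
    apply MeasurableSet.inter
    · exact measurableSet_lt (measurable_snd.comp measurable_snd) measurable_fst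
    apply MeasurableSet.inter
    · exact measurableSet_lt measurable_fst
        ((measurable_fst.comp measurable_snd).add (measurable_snd.comp measurable_snd))
    · exact measurableSet_lt
        (((measurable_fst.comp measurable_snd).pow_const 2).add
          ((measurable_snd.comp measurable_snd).pow_const 2))
        (measurable_fst.pow_const 2)
  rw [Measure.volume_eq_prod, Measure.prod_apply hmeas]
  have hfun : (fun r => volume (Prod.mk r ⁻¹' S))
      = (Ioc (0:ℝ) 2).indicator (fun r => ENNReal.ofReal ((π - 2) / 4 * r ^ 2)) := by
    funext r
    by_cases hr : r ∈ Ioc (0:ℝ) 2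
    · rw [indicator_of_mem hr]
      have : Prod.mk r ⁻¹' S = mySlice r := by
        ext ⟨x, y⟩
        simp only [hS, mySlice, mem_preimage, mem_setOf_eq, mem_Icc]
        constructor
        · rintro ⟨_, h⟩; exact h
        · intro h; exact ⟨⟨hr.1.le, hr.2⟩, h⟩
      rw [this, slice_vol hr.1 hr.2]
    · rw [indicator_of_notMem hr]
      have : Prod.mk r ⁻¹' S = ∅ := by
        ext ⟨x, y⟩
        simp only [hS, mem_preimage, mem_setOf_eq, mem_Icc, mem_empty_iff_false, iff_false]
        rintro ⟨⟨hr0, hr2⟩, ⟨hx0, _⟩, _, hxr, _, _, _⟩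
        exact hr ⟨lt_of_le_of_lt hx0 hxr, hr2⟩
      rw [this, measure_empty]
  rw [hfun]
  have : lintegral volume ((Ioc (0:ℝ) 2).indicator fun r => ENNReal.ofReal ((π - 2) / 4 * r ^ 2))
      = ∫⁻ r in Ioc (0:ℝ) 2, ENNReal.ofReal ((π - 2) / 4 * r ^ 2) :=
    lintegral_indicator measurableSet_Ioc _
  rw [this]
  have hpi : (0:ℝ) ≤ (π - 2) / 4 := by
    have := Real.pi_gt_three; linarith
  rw [← MeasureTheory.ofReal_integral_eq_lintegral_ofReal]
  · congr 1
    rw [← intervalIntegral.integral_of_le (by norm_num : (0:ℝ) ≤ 2),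
      intervalIntegral.integral_const_mul, integral_pow]
    norm_num
    ring
  · apply Integrable.const_mul
    apply ContinuousOn.integrableOn_Icc (by fun_prop) |>.mono_set Ioc_subset_Icc_self
  · filter_upwards with r using mul_nonneg hpi (sq_nonneg r)
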